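/- Let (h, e, f) be an sl2-triple in a finite-dimensional complex semisimple Lie algebra 𝔤. Then 𝔤 decomposes as the direct sum of the image of the operator ad f and the centralizer of e: 𝔤 = [f, 𝔤] ⊕ ker(ad e). (This is the transversality at f of the Slodowy slice f + ker(ad e) to the adjoint orbit of f.) -/

import Mathlib

open Module Polynomial LieAlgebra

namespace SlodowyAux

attribute [local instance] LieRing.ofAssociativeRing

variable {V : Type*} [AddCommGroup V] [Module ℂ V]

lemma mul_sub_smul_one {E H : Module.End ℂ V} (hEH : E * H = H * E - (2 : ℂ) • E) (b : ℂ) :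
    E * (H - b • 1) = (H - (b + 2) • 1) * E := by
  simp only [mul_sub, sub_mul, hEH, smul_mul_assoc, mul_smul_comm, mul_one, one_mul]
  module

lemma mul_sub_smul_one_pow {E H : Module.End ℂ V} (hEH : E * H = H * E - (2 : ℂ) • E)
    (b : ℂ) (m : ℕ) : E * (H - b • 1) ^ m = (H - (b + 2) • 1) ^ m * E := by
  induction m with
  | zero => simp
  | succ m ih =>
    rw [pow_succ, ← mul_assoc, ih, mul_assoc, mul_sub_smul_one hEH b, ← mul_assoc, ← pow_succ]

lemma pow_mul_sub_smul_one_pow {E H : Module.End ℂ V} (hEH : E * H = H * E - (2 : ℂ) • E)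
    (m : ℕ) : ∀ (k : ℕ) (b : ℂ),
    E ^ k * (H - b • 1) ^ m = (H - (b + 2 * k) • 1) ^ m * E ^ k
  | 0, b => by simp
  | (k + 1), b => by
    have key : b + 2 * (k : ℂ) + 2 = b + 2 * ((k : ℕ) + 1 : ℕ) := by push_cast; ring
    rw [pow_succ, mul_assoc, mul_sub_smul_one_pow hEH, ← mul_assoc,
      pow_mul_sub_smul_one_pow hEH m k (b + 2),
      show (b + 2) + 2 * (k : ℂ) = b + 2 * ((k : ℕ) + 1 : ℕ) by push_cast; ring,
      mul_assoc, ← pow_succ]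

lemma mul_pow_shift {F H : Module.End ℂ V} (hFH : F * H = (H + (2 : ℂ) • 1) * F) (n : ℕ) :
    F * H ^ n = (H + (2 : ℂ) • 1) ^ n * F := by
  induction n with
  | zero => simp
  | succ n ih => rw [pow_succ, ← mul_assoc, ih, mul_assoc, hFH, ← mul_assoc, ← pow_succ]

lemma mul_aeval_shift {F H : Module.End ℂ V} (hFH : F * H = (H + (2 : ℂ) • 1) * F) (p : ℂ[X]) :
    F * aeval H p = aeval (H + (2 : ℂ) • 1) p * F := by
  induction p using Polynomial.induction_on' with
  | add p q hp hq => rw [map_add, map_add, mul_add, add_mul, hp, hq]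
  | monomial n c =>
    rw [aeval_monomial, aeval_monomial, ← mul_assoc, ← Algebra.commutes c F, mul_assoc,
      mul_pow_shift hFH, ← mul_assoc]

lemma pow_apply_eigen {g : Module.End ℂ V} {v : V} {c : ℂ} (hv : g v = c • v) (n : ℕ) :
    (g ^ n) v = c ^ n • v := by
  induction n with
  | zero => simp
  | succ n ih =>
    rw [pow_succ, Module.End.mul_apply, hv, map_smul, ih, smul_smul, pow_succ, mul_comm]

lemma aeval_apply_eigen {g : Module.End ℂ V} {v : V} {c : ℂ} (hv : g v = c • v) (p : ℂ[X]) :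
    (aeval g p) v = p.eval c • v := by
  induction p using Polynomial.induction_on' with
  | add p q hp hq => rw [map_add, LinearMap.add_apply, hp, hq, eval_add, add_smul]
  | monomial n c' =>
    rw [aeval_monomial, Module.End.mul_apply, pow_apply_eigen hv, eval_monomial,
      Module.algebraMap_end_apply, smul_smul]

lemma pow_succ_mul_comm {E F H : Module.End ℂ V} (hEH : E * H = H * E - (2 : ℂ) • E)
    (hEF : E * F = F * E + H) : ∀ j : ℕ,
    E ^ (j + 1) * F = F * E ^ (j + 1) + ((j : ℂ) + 1) • ((H - (j : ℂ) • 1) * E ^ j)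
  | 0 => by simpa using hEF
  | (j + 1) => by
    have ih := pow_succ_mul_comm hEH hEF j
    have step : E ^ (j + 2) * F = F * E ^ (j + 2) +
        (((j : ℂ) + 1) + 1) • ((H - ((j : ℂ) + 1) • 1) * E ^ (j + 1)) := by
      calc E ^ (j + 2) * F = E * (E ^ (j + 1) * F) := by
            rw [← mul_assoc, ← pow_succ']
        _ = E * (F * E ^ (j + 1)) + ((j : ℂ) + 1) • (E * ((H - (j : ℂ) • 1) * E ^ j)) := by
            rw [ih, mul_add, mul_smul_comm]
        _ = (E * F) * E ^ (j + 1) +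
              ((j : ℂ) + 1) • (((H - ((j : ℂ) + 2) • 1) * E) * E ^ j) := by
            rw [mul_assoc, ← mul_assoc E (H - (j : ℂ) • 1), mul_sub_smul_one hEH]
        _ = (F * E + H) * E ^ (j + 1) +
              ((j : ℂ) + 1) • ((H - ((j : ℂ) + 2) • 1) * E ^ (j + 1)) := by
            rw [hEF, mul_assoc, ← pow_succ']
        _ = F * E ^ (j + 2) + (((j : ℂ) + 1) + 1) • ((H - ((j : ℂ) + 1) • 1) * E ^ (j + 1)) := by
            simp only [add_mul, sub_mul, smul_mul_assoc, one_mul, smul_sub, smul_smul,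
              mul_assoc, ← pow_succ']
            module
    rw [step]
    congr 2 <;> push_cast <;> ring_nf

set_option maxHeartbeats 2000000 in
/-- The key disjointness: for an `sl₂`-triple in a finite-dimensional complex Lie algebra,
the image of `ad f` meets the kernel of `ad e` trivially. -/
lemma disjoint_range_ad_ker_ad (L : Type*) [LieRing L] [LieAlgebra ℂ L] [Module.Finite ℂ L]
    {h e f : L} (ht : IsSl2Triple h e f) :
    Disjoint (LinearMap.range (ad ℂ L f)) (LinearMap.ker (ad ℂ L e)) := by
  set E := ad ℂ L e with hE
  set F := ad ℂ L f with hF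
  set H := ad ℂ L h with hH
  -- basic bracket relations as endomorphism identities
  have hbHE : H * E - E * H = (2 : ℂ) • E := by
    have h1 : ad ℂ L ⁅h, e⁆ = ⁅H, E⁆ := LieHom.map_lie (ad ℂ L) h e
    rw [ht.lie_h_e_smul ℂ, map_smul, Ring.lie_def] at h1
    exact h1.symm
  have hbHF : H * F - F * H = -((2 : ℂ) • F) := by
    have h1 : ad ℂ L ⁅h, f⁆ = ⁅H, F⁆ := LieHom.map_lie (ad ℂ L) h f
    rw [ht.lie_lie_smul_f ℂ, map_neg, map_smul, Ring.lie_def] at h1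
    exact h1.symm
  have hbEF : E * F - F * E = H := by
    have h1 : ad ℂ L ⁅e, f⁆ = ⁅E, F⁆ := LieHom.map_lie (ad ℂ L) e f
    rw [ht.lie_e_f, Ring.lie_def] at h1
    exact h1.symm
  have hEH : E * H = H * E - (2 : ℂ) • E := by rw [← hbHE]; abel
  have hHF2 : H * F = F * H - (2 : ℂ) • F := by
    have h5 := congrArg Neg.neg hbHF
    rw [neg_sub, neg_neg] at h5
    rw [← h5]; abel
  have hFH : F * H = (H + (2 : ℂ) • 1) * F := by
    rw [add_mul, smul_mul_assoc, one_mul]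
    have h5 := congrArg Neg.neg hbHF
    rw [neg_sub, neg_neg] at h5
    rw [← h5]; abel
  have hEF : E * F = F * E + H := by rw [← hbEF]; abel
  -- suppose not
  rw [disjoint_iff]
  by_contra hW0
  set W : Submodule ℂ L := LinearMap.range F ⊓ LinearMap.ker E with hWdef
  have hWnt : Nontrivial W := Submodule.nontrivial_iff_ne_bot.mpr hW0
  -- W is invariant under H
  have hWinv : ∀ x ∈ W, H x ∈ W := by
    intro x hx
    obtain ⟨hx1, hx2⟩ := Submodule.mem_inf.mp hx
    obtain ⟨y, hy⟩ := hx1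
    rw [Submodule.mem_inf]
    constructor
    · refine ⟨H y - (2 : ℂ) • y, ?_⟩
      have h2 : H (F y) = F (H y) - (2 : ℂ) • F y := by
        have h3 : (H * F) y = (F * H - (2 : ℂ) • F) y := by rw [hHF2]
        simpa [Module.End.mul_apply] using h3
      rw [map_sub, map_smul, ← h2, hy]
    · have hxk' : E x = 0 := hx2
      have h3 : (E * H) x = (H * E - (2 : ℂ) • E) x := by rw [hEH]
      simp only [Module.End.mul_apply, LinearMap.sub_apply, LinearMap.smul_apply,
        hxk', map_zero, smul_zero, sub_zero] at h3
      simpa [LinearMap.mem_ker] using h3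
  -- pick an eigenvector of H in W
  obtain ⟨μ, hμ⟩ := Module.End.exists_eigenvalue (H.restrict hWinv)
  obtain ⟨x₀, hx₀⟩ := hμ.exists_hasEigenvector
  set x : L := (x₀ : L) with hxdef
  have hxne : x ≠ 0 := fun hx => hx₀.2 (by exact_mod_cast Subtype.ext hx)
  have hxW : x ∈ W := x₀.2
  have hxH : H x = μ • x := by
    have h1 := congrArg (Subtype.val) hx₀.apply_eq_smul
    simpa [LinearMap.restrict_coe_apply] using h1
  have hxE : E x = 0 := (Submodule.mem_inf.mp hxW).2
  -- the eigenvalue is a natural number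
  have P : ht.HasPrimitiveVectorWith x μ :=
    { ne_zero := hxne
      lie_h := by rw [← ad_apply (R := ℂ)]; exact hxH
      lie_e := by rw [← ad_apply (R := ℂ)]; exact hxE }
  obtain ⟨n, hn⟩ := P.exists_nat
  set a : ℂ := (n : ℂ) + 2 with hadef
  -- find a preimage of x under F lying in a generalized eigenspace of H
  obtain ⟨y, hy⟩ := (Submodule.mem_inf.mp hxW).1
  set m : ℕ := H.charpoly.rootMultiplicity a with hmdef
  obtain ⟨q, hqeq, hqnd⟩ :=
    H.charpoly.exists_eq_pow_rootMultiplicity_mul_and_not_dvd (H.charpoly_monic.ne_zero) a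
  have hqa : q.eval a ≠ 0 := fun hc => hqnd (dvd_iff_isRoot.mpr hc)
  set z : L := (q.eval a)⁻¹ • (aeval H q) y with hzdef
  have hza : ((H - a • 1) ^ m) z = 0 := by
    have h0 : aeval H H.charpoly = 0 := H.aeval_self_charpoly
    have h2 : (H - a • 1) ^ m * aeval H q = 0 := by
      have h3 : aeval H ((X - C a) ^ m * q) = 0 := by rw [← hqeq]; exact h0
      simpa [map_mul, map_pow, map_sub, aeval_X, aeval_C,
        Algebra.algebraMap_eq_smul_one] using h3
    have h1 : ((H - a • 1) ^ m) ((aeval H q) y) = 0 := by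
      calc ((H - a • 1) ^ m) ((aeval H q) y) = ((H - a • 1) ^ m * aeval H q) y := rfl
        _ = 0 := by rw [h2]; rfl
    rw [hzdef, map_smul, h1, smul_zero]
  have hzx : F z = x := by
    have h1 : F ((aeval H q) y) = (q.eval a) • x := by
      have h2 : F ((aeval H q) y) = (aeval (H + (2 : ℂ) • 1) q) (F y) := by
        calc F ((aeval H q) y) = (F * aeval H q) y := rfl
          _ = (aeval (H + (2 : ℂ) • 1) q * F) y := by rw [mul_aeval_shift hFH]
          _ = (aeval (H + (2 : ℂ) • 1) q) (F y) := rfl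
      have h3 : (H + (2 : ℂ) • 1) x = a • x := by
        rw [LinearMap.add_apply, hxH, hn, LinearMap.smul_apply, Module.End.one_apply, hadef,
          add_smul]
      rw [h2, hy, aeval_apply_eigen h3]
    rw [hzdef, map_smul, h1, smul_smul, inv_mul_cancel₀ hqa, one_smul]
  have hzne : z ≠ 0 := fun hc => hxne (by rw [← hzx, hc, map_zero])
  -- the chain E^j z
  set w : ℕ → L := fun j => (E ^ j) z with hwdef
  have hw0 : w 0 = z := by simp [hwdef]
  have hwgen : ∀ j : ℕ, ((H - (a + 2 * j) • 1) ^ m) (w j) = 0 := by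
    intro j
    calc ((H - (a + 2 * j) • 1) ^ m) ((E ^ j) z)
        = ((H - (a + 2 * j) • 1) ^ m * E ^ j) z := rfl
      _ = (E ^ j * (H - a • 1) ^ m) z := by rw [pow_mul_sub_smul_one_pow hEH]
      _ = (E ^ j) (((H - a • 1) ^ m) z) := rfl
      _ = 0 := by rw [hza, map_zero]
  -- the chain terminates
  have hwvanish : ∃ j, w j = 0 := by
    by_contra hc
    push_neg at hc
    have heig : ∀ j : ℕ, H.HasEigenvalue (a + 2 * j) := by
      intro j
      have hmem : w j ∈ H.maxGenEigenspace (a + 2 * j) :=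
        (Module.End.mem_maxGenEigenspace H _ _).mpr ⟨m, hwgen j⟩
      have hne : H.maxGenEigenspace (a + 2 * j) ≠ ⊥ :=
        (Submodule.ne_bot_iff _).mpr ⟨w j, hmem, hc j⟩
      exact (Module.End.hasUnifEigenvalue_iff_hasUnifEigenvalue_one (by simp)).mp hne
    have hinj : Function.Injective (fun j : ℕ => a + 2 * (j : ℂ)) := by
      intro i j hij
      simp only [add_right_inj] at hij
      exact_mod_cast mul_left_cancel₀ (two_ne_zero) hij
    exact (Set.infinite_range_of_injective hinj).mono
      (Set.range_subset_iff.mpr heig) H.finite_hasEigenvalue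
  obtain ⟨k, hwk, hwk1⟩ :=
    Nat.exists_not_and_succ_of_not_zero_of_exists (p := fun j => w j = 0)
      (by intro hc; simp only [hw0] at hc; exact hzne hc) hwvanish
  -- derive `H (w k) = k • w k`
  have hFEz : F (E z) = -(H z) := by
    have h1 : (E * F - F * E) z = H z := by rw [hbEF]
    simp only [LinearMap.sub_apply, Module.End.mul_apply] at h1
    have h2 : E (F z) = 0 := by rw [hzx, hxE]
    rw [h2, zero_sub] at h1
    exact neg_eq_iff_eq_neg.mp h1
  have hHwk : H (w k) = (k : ℂ) • w k := by
    cases k with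
    | zero =>
      have hEz : E z = 0 := by simpa [hwdef] using hwk1
      have hHz : H z = 0 := by
        have := hFEz
        rw [hEz, map_zero] at this
        simpa using this.symm
      simpa [hw0] using hHz
    | succ j =>
      set u : L := E z with hudef
      have happ : (E ^ (j + 1)) (F u) = F ((E ^ (j + 1)) u) +
          ((j : ℂ) + 1) • ((H - (j : ℂ) • 1) ((E ^ j) u)) := by
        have h1 : (E ^ (j + 1) * F) u =
            (F * E ^ (j + 1) + ((j : ℂ) + 1) • ((H - (j : ℂ) • 1) * E ^ j)) u := by
          rw [pow_succ_mul_comm hEH hEF j]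
        simpa [Module.End.mul_apply] using h1
      have hA1 : (E ^ j) u = w (j + 1) := by
        rw [hudef, ← Module.End.mul_apply, ← pow_succ]
      have hA2 : (E ^ (j + 1)) u = 0 := by
        rw [hudef, ← Module.End.mul_apply, ← pow_succ]
        exact hwk1
      have hop : E ^ (j + 1) * H = (H - (2 * ((j : ℕ) + 1 : ℕ) : ℂ) • 1) * E ^ (j + 1) := by
        have h1 := pow_mul_sub_smul_one_pow hEH 1 (j + 1) (0 : ℂ)
        simpa using h1
      have hLHS : (E ^ (j + 1)) (F u) =
          -(H (w (j + 1))) + (2 * ((j : ℂ) + 1)) • w (j + 1) := by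
        rw [hudef, hFEz, map_neg]
        have h1 : (E ^ (j + 1)) (H z) =
            (H - (2 * ((j : ℕ) + 1 : ℕ) : ℂ) • 1) ((E ^ (j + 1)) z) := by
          calc (E ^ (j + 1)) (H z) = (E ^ (j + 1) * H) z := rfl
            _ = _ := by rw [hop]; rfl
        rw [h1]
        have h2 : ((E ^ (j + 1)) z) = w (j + 1) := rfl
        rw [h2, LinearMap.sub_apply, LinearMap.smul_apply, Module.End.one_apply, neg_sub]
        rw [show ((2 * ((j : ℕ) + 1 : ℕ) : ℂ)) = 2 * ((j : ℂ) + 1) by push_cast; ring]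
        abel
      rw [hA1, hA2, map_zero, zero_add, hLHS] at happ
      have hsplit : (H - (j : ℂ) • 1) (w (j + 1)) = H (w (j + 1)) - (j : ℂ) • w (j + 1) := by
        simp [LinearMap.sub_apply]
      rw [hsplit] at happ
      -- cancel the factor (j + 2)
      have hkey : ((j : ℂ) + 2) • (H (w (j + 1))) =
          ((j : ℂ) + 2) • (((j : ℂ) + 1) • w (j + 1)) := by
        have := happ
        rw [smul_smul]
        linear_combination (norm := module) -this
      have h2ne : ((j : ℂ) + 2) ≠ 0 := by
        intro hc
        have : ((j : ℕ) : ℂ) = -2 := by linear_combination hc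
        have h3 : (0 : ℝ) ≤ ((j : ℕ) : ℂ).re := by simp
        rw [this] at h3
        norm_num at h3
      have := smul_right_injective L h2ne hkey
      rw [this]
      congr 1
      push_cast
      ring
  -- contradiction with generalized eigenvector property
  have hsub : (H - (a + 2 * k) • 1) (w k) = (-(a + k)) • w k := by
    rw [LinearMap.sub_apply, hHwk, LinearMap.smul_apply, Module.End.one_apply, ← sub_smul]
    congr 1; ring
  have hscal : ((-(a + (k : ℂ))) ^ m) • w k = 0 := by
    rw [← pow_apply_eigen hsub m]
    exact hwgen k
  have hane : -(a + (k : ℂ)) ≠ 0 := by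
    rw [hadef]
    intro hc
    have h1 : ((n + k + 2 : ℕ) : ℂ) = 0 := by push_cast; linear_combination -hc
    norm_cast at h1
  exact hwk (by
    have h1 := hscal
    rw [smul_eq_zero] at h1
    exact h1.resolve_left (pow_ne_zero m hane))

end SlodowyAux

/-- Let `(h, e, f)` be an `sl₂`-triple in a finite-dimensional complex semisimple Lie algebra
`𝔤`.  Then `𝔤` decomposes as the direct sum of the image of the operator `ad f` and the
centralizer of `e`: namely `𝔤 = ⁅f, 𝔤⁆ ⊕ ker (ad e)`.  (This is the transversality at `f` of the
Slodowy slice `f + ker (ad e)` to the adjoint orbit of `f`.) -/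
theorem range_ad_f_isCompl_ker_ad_e
    (L : Type*) [LieRing L] [LieAlgebra ℂ L] [Module.Finite ℂ L]
    [LieAlgebra.IsSemisimple ℂ L]
    (h e f : L) (ht : IsSl2Triple h e f) :
    IsCompl (LinearMap.range (LieAlgebra.ad ℂ L f))
      (LinearMap.ker (LieAlgebra.ad ℂ L e)) := by
  have hd1 := SlodowyAux.disjoint_range_ad_ker_ad L ht
  have hd2 := SlodowyAux.disjoint_range_ad_ker_ad L ht.symm
  constructor
  · exact hd1
  · -- codisjointness via a dimension count
    have r1 := LinearMap.finrank_range_add_finrank_ker (LieAlgebra.ad ℂ L e)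
    have r2 := LinearMap.finrank_range_add_finrank_ker (LieAlgebra.ad ℂ L f)
    have i1 := Submodule.finrank_add_finrank_le_of_disjoint hd1
    have i2 := Submodule.finrank_add_finrank_le_of_disjoint hd2
    rw [codisjoint_iff]
    apply Submodule.eq_top_of_disjoint _ _ _ hd1
    omega
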